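/- Let ĉ be a random variable with ĉ ≤ c* almost surely for a constant c*, and Pr(ĉ < c*) > 0. Let S be a real-valued random variable such that, almost surely, the conditional probability Pr(S ∈ J | ĉ) is positive for every non-empty open interval J ⊆ ℝ. Then Pr(ĉ < S ≤ c*) > 0. -/

import Mathlib

open MeasureTheory Set

theorem stmt_4 {Ω : Type*} [MeasurableSpace Ω] (μ : Measure Ω) [IsProbabilityMeasure μ]
    (chat S : Ω → ℝ) (hchat : Measurable chat) (hS : Measurable S)
    (cstar : ℝ)
    (hle : ∀ᵐ ω ∂μ, chat ω ≤ cstar)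
    (hlt : 0 < μ {ω | chat ω < cstar})
    (hcond : ∀ a b : ℝ, a < b →
      ∀ᵐ ω ∂μ, 0 < (μ[indicator {ω' | S ω' ∈ Ioo a b} (fun _ => (1 : ℝ)) |
        MeasurableSpace.comap chat Real.measurableSpace]) ω) :
    0 < μ {ω | chat ω < S ω ∧ S ω ≤ cstar} := by
  -- find a rational a < cstar with μ {chat < a} > 0
  obtain ⟨a, ha, hA⟩ : ∃ a : ℚ, (a : ℝ) < cstar ∧ 0 < μ {ω | chat ω < (a : ℝ)} := by
    by_contra h
    push_neg at h
    have hcover : {ω | chat ω < cstar} ⊆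
        ⋃ q : {q : ℚ // (q : ℝ) < cstar}, {ω | chat ω < ((q : ℚ) : ℝ)} := by
      intro ω hω
      obtain ⟨q, hq1, hq2⟩ := exists_rat_btwn (show chat ω < cstar from hω)
      exact Set.mem_iUnion.2 ⟨⟨q, hq2⟩, hq1⟩
    have : μ {ω | chat ω < cstar} = 0 := by
      refine measure_mono_null hcover (measure_iUnion_null fun q => ?_)
      exact le_antisymm (h q q.2) zero_le
    exact hlt.ne' this
  have hm : MeasurableSpace.comap chat Real.measurableSpace ≤ ‹MeasurableSpace Ω› :=
    hchat.comap_le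
  haveI : SigmaFinite (μ.trim hm) := by
    have : IsFiniteMeasure (μ.trim hm) := isFiniteMeasure_trim hm
    infer_instance
  set t : Set Ω := {ω' | S ω' ∈ Ioo (a : ℝ) cstar} with ht_def
  have htm : MeasurableSet t := hS measurableSet_Ioo
  set f : Ω → ℝ := indicator t (fun _ => (1 : ℝ)) with hf_def
  have hf_int : Integrable f μ := (integrable_const (1 : ℝ)).indicator htm
  have hf_nonneg : 0 ≤ᵐ[μ] f :=
    Filter.Eventually.of_forall fun ω => Set.indicator_nonneg (fun _ _ => zero_le_one) ω
  have hg_nonneg : 0 ≤ᵐ[μ] μ[f|MeasurableSpace.comap chat Real.measurableSpace] :=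
    condExp_nonneg hf_nonneg
  have hg_pos : ∀ᵐ ω ∂μ,
      0 < (μ[f|MeasurableSpace.comap chat Real.measurableSpace]) ω := hcond a cstar ha
  set A : Set Ω := {ω | chat ω < (a : ℝ)} with hA_def
  have hAm : MeasurableSet[MeasurableSpace.comap chat Real.measurableSpace] A :=
    ⟨Iio (a : ℝ), measurableSet_Iio, rfl⟩
  have hAmeas : MeasurableSet A := hm _ hAm
  -- integral of condexp over A is positive
  have h1 : 0 < ∫ ω in A,
      (μ[f|MeasurableSpace.comap chat Real.measurableSpace]) ω ∂μ := by
    rw [setIntegral_pos_iff_support_of_nonneg_ae (ae_restrict_of_ae hg_nonneg)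
      (integrable_condExp.integrableOn)]
    calc 0 < μ A := hA
      _ ≤ μ (Function.support (μ[f|MeasurableSpace.comap chat Real.measurableSpace]) ∩ A) := by
          refine measure_mono_ae ?_
          filter_upwards [hg_pos] with ω hω hωA
          exact ⟨ne_of_gt hω, hωA⟩
  have h2 : ∫ ω in A,
      (μ[f|MeasurableSpace.comap chat Real.measurableSpace]) ω ∂μ = (μ (A ∩ t)).toReal := by
    rw [setIntegral_condExp hm hf_int hAm, hf_def, setIntegral_indicator htm,
      setIntegral_const]
    simp [measureReal_def]
  have hAt : 0 < μ (A ∩ t) := by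
    rcases (show (0 : ENNReal) ≤ μ (A ∩ t) from zero_le).lt_or_eq with h | h
    · exact h
    · rw [h2, ← h] at h1; simp at h1
  refine hAt.trans_le (measure_mono ?_)
  rintro ω ⟨hωA, hωt⟩
  exact ⟨lt_trans hωA hωt.1, le_of_lt hωt.2⟩
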